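/- arXiv:1603.09376 — 3 statements merged into one kernel-verified Lean document; each statement's English description precedes it below -/
import Mathlib

section
/- Let K ≥ 1 be a natural number and let M, N, N_E be nonnegative real numbers with M ≤ N. Suppose d, α, β : Fin K → ℝ are nonnegative families satisfying: (i) (∑ i, d i) + (⨆ i, α i) ≤ N (the secure and largest non-secure signal parts fit in the N receiver dimensions); (ii) d i + α i + β i ≤ M for every i (each transmitter's message occupies at most M dimensions); (iii) ∑ i, (α i + β i) = N_E (the eavesdropper decodes exactly N_E degrees of freedom); (iv) β i ≤ 0 for every i, hence β i = 0 (no part of any message can miss the receiver when M ≤ N). Then ∑ i, d i ≤ min (K • M − N_E) (N − N_E / K). -/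
open Finset

/-- Upper-bound LP for the K-user MAC, case `M ≤ N`:
`∑ d ≤ min (K•M − N_E) (N − N_E/K)`. -/
theorem mac_sdof_upper_bound_M_le_N
    (K : ℕ) (hK : 1 ≤ K) (M N N_E : ℝ)
    (hM : 0 ≤ M) (hN : 0 ≤ N) (hNE : 0 ≤ N_E) (hMN : M ≤ N)
    (d α β : Fin K → ℝ)
    (hd : ∀ i, 0 ≤ d i) (hα : ∀ i, 0 ≤ α i) (hβ : ∀ i, 0 ≤ β i)
    (h1 : (∑ i, d i) + (⨆ i, α i) ≤ N)
    (h2 : ∀ i, d i + α i + β i ≤ M)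
    (h3 : ∑ i, (α i + β i) = N_E)
    (h4 : ∀ i, β i ≤ 0) :
    ∑ i, d i ≤ min (K • M - N_E) (N - N_E / K) := by
  have hβ0 : ∀ i, β i = 0 := fun i => le_antisymm (h4 i) (hβ i)
  have hK0 : (0 : ℝ) < K := by exact_mod_cast hK
  have hαE : ∑ i, α i = N_E := by
    rw [← h3]; exact Finset.sum_congr rfl (fun i _ => by rw [hβ0 i]; ring)
  have hsup : ∀ i, α i ≤ ⨆ j, α j := fun i =>
    le_ciSup (Set.Finite.bddAbove (Set.finite_range α)) i
  apply le_min
  · -- ∑ d ≤ K•M − N_E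
    have : ∑ i, (d i + α i) ≤ ∑ _i : Fin K, M :=
      Finset.sum_le_sum (fun i _ => by have := h2 i; have := hβ i; linarith [hβ0 i, h2 i])
    simp only [Finset.sum_add_distrib, hαE, Finset.sum_const, Finset.card_univ,
      Fintype.card_fin] at this
    rw [nsmul_eq_mul] at this ⊢
    linarith
  · -- ∑ d ≤ N − N_E/K
    have havg : N_E ≤ K * (⨆ j, α j) := by
      calc N_E = ∑ i, α i := hαE.symm
        _ ≤ ∑ _i : Fin K, (⨆ j, α j) := Finset.sum_le_sum (fun i _ => hsup i)
        _ = K * (⨆ j, α j) := by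
            simp [Finset.sum_const, Finset.card_univ, nsmul_eq_mul]
    have : N_E / K ≤ ⨆ j, α j := by
      rw [div_le_iff₀ hK0]; linarith
    linarith
end

section
/- Let K ≥ 1 be a natural number and let M, N, N_E be nonnegative real numbers with N ≤ M. Suppose d, α, β : Fin K → ℝ are nonnegative families satisfying: (i) (∑ i, d i) + (⨆ i, α i) ≤ N; (ii) ∑ i, (α i + β i) = N_E; (iii) β i ≤ M − N for every i. Then ∑ i, d i ≤ min (M − N_E / K) N, i.e. both ∑ i, d i ≤ M − N_E/K and ∑ i, d i ≤ N hold. -/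
open Finset

/-- Upper-bound LP for the K-user MAC, case `N ≤ M`:
`∑ d ≤ min (M − N_E/K) N`. -/
theorem mac_sdof_upper_bound_N_le_M
    (K : ℕ) (hK : 1 ≤ K) (M N N_E : ℝ)
    (hM : 0 ≤ M) (hN : 0 ≤ N) (hNE : 0 ≤ N_E) (hNM : N ≤ M)
    (d α β : Fin K → ℝ)
    (hd : ∀ i, 0 ≤ d i) (hα : ∀ i, 0 ≤ α i) (hβ : ∀ i, 0 ≤ β i)
    (h1 : (∑ i, d i) + (⨆ i, α i) ≤ N)
    (h2 : ∑ i, (α i + β i) = N_E)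
    (h3 : ∀ i, β i ≤ M - N) :
    ∑ i, d i ≤ min (M - N_E / K) N := by
  have hne : Nonempty (Fin K) := Fin.pos_iff_nonempty.mp hK
  have hbdd : BddAbove (Set.range α) := Set.Finite.bddAbove (Set.finite_range α)
  have hle : ∀ i, α i ≤ ⨆ j, α j := fun i => le_ciSup hbdd i
  have hS0 : 0 ≤ ⨆ i, α i := le_trans (hα (Classical.arbitrary _)) (hle _)
  have hKpos : (0:ℝ) < K := by exact_mod_cast hK
  have hsumα : ∑ i, α i ≤ (K:ℝ) * (⨆ i, α i) := by
    calc ∑ i, α i ≤ ∑ _i : Fin K, (⨆ j, α j) := Finset.sum_le_sum (fun i _ => hle i)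
    _ = (K:ℝ) * (⨆ i, α i) := by simp [mul_comm]
  have hsumβ : ∑ i, β i ≤ (K:ℝ) * (M - N) := by
    calc ∑ i, β i ≤ ∑ _i : Fin K, (M - N) := Finset.sum_le_sum (fun i _ => h3 i)
    _ = (K:ℝ) * (M - N) := by simp [mul_comm]; ring
  have hNEle : N_E ≤ (K:ℝ) * (⨆ i, α i) + (K:ℝ) * (M - N) := by
    rw [← h2, Finset.sum_add_distrib]; linarith
  have hdiv : N_E / K ≤ (⨆ i, α i) + (M - N) := by
    rw [div_le_iff₀ hKpos]; nlinarith
  exact le_min (by linarith) (by linarith)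
end

section
/- Let n be a natural number and let B : Matrix (Fin n) (Fin n) ℝ be a positive-definite symmetric matrix. Then the function P ↦ Real.log (Matrix.det (1 + P • B)) / Real.log P tends to (n : ℝ) as P → ∞ (along Filter.atTop). -/
open Filter

/-- For a fixed positive-definite symmetric matrix `B`,
`log det (I + P • B) / log P → n` as `P → ∞`. -/
theorem logdet_prelog_limit
    (n : ℕ) (B : Matrix (Fin n) (Fin n) ℝ)
    (hB : B.PosDef) (hBsymm : B.IsSymm) :
    Tendsto
      (fun P : ℝ => Real.log (Matrix.det (1 + P • B)) / Real.log P)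
      atTop (nhds (n : ℝ)) := by
  have hD : 0 < B.det := hB.det_pos
  -- g P = det (P⁻¹ • 1 + B) tends to det B
  have hg : Tendsto (fun P : ℝ => Matrix.det (P⁻¹ • (1 : Matrix (Fin n) (Fin n) ℝ) + B))
      atTop (nhds B.det) := by
    have h1 : Tendsto (fun P : ℝ => P⁻¹ • (1 : Matrix (Fin n) (Fin n) ℝ) + B)
        atTop (nhds ((0 : ℝ) • (1 : Matrix (Fin n) (Fin n) ℝ) + B)) := by
      exact (tendsto_inv_atTop_zero.smul_const _).add tendsto_const_nhds
    rw [zero_smul, zero_add] at h1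
    exact (Continuous.tendsto (continuous_id.matrix_det) B).comp h1
  have hlogg : Tendsto (fun P : ℝ => Real.log
      (Matrix.det (P⁻¹ • (1 : Matrix (Fin n) (Fin n) ℝ) + B))) atTop (nhds (Real.log B.det)) :=
    ((Real.continuousAt_log hD.ne').tendsto).comp hg
  have h0 : Tendsto (fun P : ℝ => Real.log
      (Matrix.det (P⁻¹ • (1 : Matrix (Fin n) (Fin n) ℝ) + B)) / Real.log P)
      atTop (nhds 0) := Tendsto.div_atTop hlogg Real.tendsto_log_atTop
  have key : ∀ᶠ P : ℝ in atTop,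
      Real.log (Matrix.det (1 + P • B)) / Real.log P
        = (n : ℝ) + Real.log (Matrix.det (P⁻¹ • (1 : Matrix (Fin n) (Fin n) ℝ) + B)) /
            Real.log P := by
    filter_upwards [eventually_gt_atTop (1 : ℝ)] with P hP
    have hP0 : (0 : ℝ) < P := lt_trans one_pos hP
    have hlogP : Real.log P ≠ 0 := ne_of_gt (Real.log_pos hP)
    have hsd : (P⁻¹ • (1 : Matrix (Fin n) (Fin n) ℝ)).PosSemidef := by
      rw [Matrix.smul_one_eq_diagonal]
      exact Matrix.posSemidef_diagonal_iff.mpr fun i => by positivity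
    have hpd : (P⁻¹ • (1 : Matrix (Fin n) (Fin n) ℝ) + B).PosDef := Matrix.PosDef.posSemidef_add hsd hB
    have hfac : (1 : Matrix (Fin n) (Fin n) ℝ) + P • B
        = P • (P⁻¹ • (1 : Matrix (Fin n) (Fin n) ℝ) + B) := by
      rw [smul_add, smul_smul, mul_inv_cancel₀ hP0.ne', one_smul]
    rw [hfac, Matrix.det_smul, Real.log_mul (by positivity) hpd.det_pos.ne',
      Real.log_pow, Fintype.card_fin, add_div, mul_div_assoc,
      div_self hlogP, mul_one]
  have := h0.const_add (n : ℝ)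
  rw [add_zero] at this
  exact Tendsto.congr' (Filter.EventuallyEq.symm key) this
end
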